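/- Let μ_1, …, μ_r be distinct nonzero complex numbers, let L > r, let Z(μ) = (1, μ, μ², …, μ^{L−1})^T ∈ ℂ^L, and let 𝓛 = span{Z(μ_1), …, Z(μ_r)}. Let e_L = (0, …, 0, 1)^T and assume e_L ∉ 𝓛 (equivalently, the orthogonal projection Q of e_L onto 𝓛^⊥ is nonzero; its last coordinate equals ‖Q‖² > 0). Let A = (A_0, …, A_{L−1})^T be Q normalized so that its last coordinate A_{L−1} = −1, and define the polynomial q(z) = Σ_{j=0}^{L−1} conj(A_j) z^j (of degree L−1, with leading coefficient −1). Then q(μ_k) = 0 for every k = 1, …, r, and all the remaining L − 1 − r roots of q (the extraneous roots of the min-norm prediction) lie strictly inside the unit circle, i.e. have modulus less than 1. -/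

import Mathlib

open Polynomial

set_option maxHeartbeats 1000000 in
open ComplexConjugate Finset in
/-- Let `μ 1, …, μ r` be distinct nonzero complex numbers, `L > r`,
`Z(μ) = (1, μ, …, μ^{L-1})`, `𝓛 = span{Z(μ k)}`, and `e_L ∉ 𝓛`. Let `Q` be the
orthogonal projection of `e_L` onto `𝓛^⊥` (so `Q ⊥ 𝓛` and `e_L - Q ∈ 𝓛`), and let
`A` be `Q` scaled so that its last coordinate is `-1`. Then all the signal roots
`μ k` are roots of the min-norm prediction polynomial
`q(z) = ∑_j conj(A j) z^j`, and every remaining (extraneous) root of `q` lies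
strictly inside the unit circle. -/
theorem min_norm_extraneous_roots_inside_unit_circle
    (L r : ℕ) (hLr : r < L)
    (μ : Fin r → ℂ) (hinj : Function.Injective μ) (hne : ∀ k, μ k ≠ 0)
    (Z : ℂ → (Fin L → ℂ)) (hZ : ∀ x : ℂ, Z x = fun j : Fin L => x ^ (j : ℕ))
    (eL : Fin L → ℂ) (heL : eL = fun j : Fin L => if (j : ℕ) = L - 1 then (1 : ℂ) else 0)
    (heLnotin : eL ∉ Submodule.span ℂ (Set.range fun k : Fin r => Z (μ k)))
    (Q : Fin L → ℂ)
    (hQorth : ∀ k : Fin r, ∑ j : Fin L, Q j * starRingEnd ℂ (Z (μ k) j) = 0)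
    (hQproj : eL - Q ∈ Submodule.span ℂ (Set.range fun k : Fin r => Z (μ k)))
    (A : Fin L → ℂ) (c : ℂ) (hc : c ≠ 0) (hA : A = c • Q)
    (hAlast : A ⟨L - 1, by omega⟩ = -1)
    (q : ℂ[X])
    (hq : q = ∑ j : Fin L, C (starRingEnd ℂ (A j)) * X ^ (j : ℕ)) :
    (∀ k : Fin r, q.eval (μ k) = 0) ∧
    ∀ z : ℂ, q.eval z = 0 → (∀ k : Fin r, z ≠ μ k) → ‖z‖ < 1 := by
  have hL1 : L - 1 < L := by omega
  -- coefficients of q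
  have hqc : ∀ n : ℕ, (hn : n < L) → q.coeff n = conj (A ⟨n, hn⟩) := by
    intro n hn
    rw [hq, Polynomial.finset_sum_coeff]
    simp only [Polynomial.coeff_C_mul, Polynomial.coeff_X_pow]
    rw [Finset.sum_eq_single (⟨n, hn⟩ : Fin L)]
    · simp
    · intro j _ hj
      have : ¬ (n = (j : ℕ)) := by
        intro h; exact hj (by simp [Fin.ext_iff, h.symm])
      simp [this]
    · intro h; exact absurd (Finset.mem_univ _) h
  have hqc0 : ∀ n : ℕ, L ≤ n → q.coeff n = 0 := by
    intro n hn
    rw [hq, Polynomial.finset_sum_coeff]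
    simp only [Polynomial.coeff_C_mul, Polynomial.coeff_X_pow]
    apply Finset.sum_eq_zero
    intro j _
    have : ¬ (n = (j : ℕ)) := by have := j.isLt; omega
    simp [this]
  -- Part 1 : signal roots
  have part1 : ∀ k : Fin r, q.eval (μ k) = 0 := by
    intro k
    have h0 : ∑ j : Fin L, Q j * conj ((μ k) ^ (j : ℕ)) = 0 := by
      simpa [hZ] using hQorth k
    have h1 : ∑ j : Fin L, A j * conj ((μ k) ^ (j : ℕ)) = 0 := by
      rw [hA]
      simp only [Pi.smul_apply, smul_eq_mul, mul_assoc]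
      rw [← Finset.mul_sum, h0, mul_zero]
    have h2 : q.eval (μ k) = conj (∑ j : Fin L, A j * conj ((μ k) ^ (j : ℕ))) := by
      rw [hq]
      simp [Polynomial.eval_finset_sum, map_sum, map_mul]
    rw [h2, h1, map_zero]
  refine ⟨part1, ?_⟩
  -- minimal norm property of A
  have key : ∀ B : Fin L → ℂ,
      (∀ k : Fin r, ∑ j : Fin L, B j * conj (Z (μ k) j) = 0) →
      B ⟨L - 1, hL1⟩ = -1 →
      ∑ j : Fin L, Complex.normSq (A j) ≤ ∑ j : Fin L, Complex.normSq (B j) := by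
    intro B hBorth hBlast
    set u : Fin L → ℂ := fun j => B j - A j with hu
    have hAorth : ∀ k : Fin r, ∑ j : Fin L, A j * conj (Z (μ k) j) = 0 := by
      intro k
      rw [hA]
      simp only [Pi.smul_apply, smul_eq_mul, mul_assoc]
      rw [← Finset.mul_sum, hQorth k, mul_zero]
    have huorth : ∀ k : Fin r, ∑ j : Fin L, u j * conj (Z (μ k) j) = 0 := by
      intro k
      simp only [hu, sub_mul]
      rw [Finset.sum_sub_distrib, hBorth k, hAorth k, sub_zero]
    let S : Submodule ℂ (Fin L → ℂ) :=
      { carrier := {v | ∑ j : Fin L, u j * conj (v j) = 0}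
        add_mem' := by
          intro a b ha hb
          simp only [Set.mem_setOf_eq] at ha hb ⊢
          simp only [Pi.add_apply, map_add, mul_add]
          rw [Finset.sum_add_distrib, ha, hb, add_zero]
        zero_mem' := by simp
        smul_mem' := by
          intro a v hv
          simp only [Set.mem_setOf_eq] at hv ⊢
          simp only [Pi.smul_apply, smul_eq_mul, map_mul]
          have : ∑ x : Fin L, u x * ((starRingEnd ℂ) a * (starRingEnd ℂ) (v x))
              = (starRingEnd ℂ) a * ∑ x : Fin L, u x * (starRingEnd ℂ) (v x) := by
            rw [Finset.mul_sum]
            exact Finset.sum_congr rfl fun x _ => by ring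
          rw [this, hv, mul_zero] }
    have hspan : Submodule.span ℂ (Set.range fun k : Fin r => Z (μ k)) ≤ S := by
      rw [Submodule.span_le]
      rintro v ⟨k, rfl⟩
      exact huorth k
    have h1 : ∑ j : Fin L, u j * conj (eL j) = 0 := by
      have hterm : ∀ j : Fin L, u j * conj (eL j)
          = if j = ⟨L - 1, hL1⟩ then u j else 0 := by
        intro j
        by_cases h : j = ⟨L - 1, hL1⟩
        · subst h; simp [heL]
        · have : ¬ ((j : ℕ) = L - 1) := by
            intro hh; exact h (by simp [Fin.ext_iff, hh])
          simp [heL, this, h]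
      rw [Finset.sum_congr rfl (fun j _ => hterm j), Finset.sum_ite_eq']
      simp [hu, hBlast, hAlast]
    have h2 : ∑ j : Fin L, u j * conj (Q j) = 0 := by
      have h3 : ∑ j : Fin L, u j * conj ((eL - Q) j) = 0 := hspan hQproj
      have h4 : ∑ j : Fin L, u j * conj ((eL - Q) j)
          = (∑ j : Fin L, u j * conj (eL j)) - ∑ j : Fin L, u j * conj (Q j) := by
        simp only [Pi.sub_apply, map_sub, mul_sub]
        rw [Finset.sum_sub_distrib]
      rw [h4, h1] at h3
      rw [zero_sub, neg_eq_zero] at h3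
      exact h3
    have h3 : ∑ j : Fin L, u j * conj (A j) = 0 := by
      rw [hA]
      simp only [Pi.smul_apply, smul_eq_mul, map_mul]
      have : ∑ x : Fin L, u x * ((starRingEnd ℂ) c * (starRingEnd ℂ) (Q x))
          = (starRingEnd ℂ) c * ∑ x : Fin L, u x * (starRingEnd ℂ) (Q x) := by
        rw [Finset.mul_sum]
        exact Finset.sum_congr rfl fun x _ => by ring
      rw [this, h2, mul_zero]
    have hexp : ∀ j : Fin L, Complex.normSq (B j)
        = Complex.normSq (A j) + Complex.normSq (u j) + 2 * (u j * conj (A j)).re := by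
      intro j
      have hB : B j = A j + u j := by simp [hu]
      rw [hB, Complex.normSq_add]
      have : (A j * conj (u j)).re = (u j * conj (A j)).re := by
        simp [Complex.mul_re]
        ring
      rw [this]
    have hsum : ∑ j : Fin L, Complex.normSq (B j)
        = ∑ j : Fin L, Complex.normSq (A j) + ∑ j : Fin L, Complex.normSq (u j)
          + 2 * (∑ j : Fin L, u j * conj (A j)).re := by
      rw [Finset.sum_congr rfl (fun j _ => hexp j)]
      rw [Finset.sum_add_distrib, Finset.sum_add_distrib, Complex.re_sum, Finset.mul_sum]
    rw [hsum, h3]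
    have : (0:ℝ) ≤ ∑ j : Fin L, Complex.normSq (u j) :=
      Finset.sum_nonneg fun j _ => Complex.normSq_nonneg _
    simp only [Complex.zero_re, mul_zero, add_zero]
    linarith
  -- Part 2
  intro z0 hz0 hz0ne
  have hqtop : q.coeff (L - 1) = -1 := by
    rw [hqc (L - 1) hL1]
    rw [show (⟨L - 1, hL1⟩ : Fin L) = ⟨L - 1, by omega⟩ from rfl, hAlast]
    simp
  have hqne : q ≠ 0 := fun h => by simp [h] at hqtop
  have hdvd : (X - C z0) ∣ q := dvd_iff_isRoot.mpr hz0
  obtain ⟨g, hg⟩ := hdvd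
  have hg' : q = g * (X - C z0) := by rw [hg, mul_comm]
  have hgne : g ≠ 0 := fun h => hqne (by rw [hg', h, zero_mul])
  have hqdeg : q.natDegree = L - 1 := by
    refine le_antisymm ?_ (le_natDegree_of_ne_zero (by rw [hqtop]; norm_num))
    rw [Polynomial.natDegree_le_iff_coeff_eq_zero]
    intro N hN
    exact hqc0 N (by omega)
  have hgdeg1 : g.natDegree + 1 = L - 1 := by
    rw [← hqdeg, hg', Polynomial.natDegree_mul hgne (Polynomial.X_sub_C_ne_zero z0),
      Polynomial.natDegree_X_sub_C]
  obtain ⟨M, rfl⟩ : ∃ M, L = M + 2 := ⟨L - 2, by omega⟩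
  have hgdeg : g.natDegree = M := by omega
  set b : ℕ → ℂ := fun n => g.coeff n with hb
  have hbz : ∀ n, M < n → b n = 0 := by
    intro n hn
    exact Polynomial.coeff_eq_zero_of_natDegree_lt (by omega)
  have hbM : b M = -1 := by
    have h1 : q.coeff (M + 1) = b M - b (M + 1) * z0 := by
      rw [hg']; exact Polynomial.coeff_mul_X_sub_C
    rw [hbz (M + 1) (by omega)] at h1
    have h2 : q.coeff (M + 1) = -1 := by
      have := hqtop; norm_num at this; exact this
    rw [h2] at h1
    simpa using h1.symm
  set s : ℝ := ∑ j ∈ range (M + 1), Complex.normSq (b j) with hs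
  set T : ℂ := ∑ j ∈ range (M + 1), b j * conj (b (j + 1)) with hT
  have hs1 : 1 ≤ s := by
    rw [hs, Finset.sum_range_succ, hbM]
    have : (0:ℝ) ≤ ∑ j ∈ range M, Complex.normSq (b j) :=
      Finset.sum_nonneg fun j _ => Complex.normSq_nonneg _
    simp only [Complex.normSq_neg, Complex.normSq_one]
    linarith
  have hs0 : (0:ℝ) < s := by linarith
  -- the norm of the coefficient vector of (X - w) * g
  have hf : ∀ w : ℂ, ∑ j : Fin (M + 2), Complex.normSq ((g * (X - C w)).coeff (j : ℕ))
      = s + Complex.normSq w * s - 2 * (conj w * T).re := by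
    intro w
    have hfin : ∑ j : Fin (M + 2), Complex.normSq ((g * (X - C w)).coeff (j : ℕ))
        = ∑ j ∈ range (M + 2), Complex.normSq ((g * (X - C w)).coeff j) :=
      Fin.sum_univ_eq_sum_range (fun n => Complex.normSq ((g * (X - C w)).coeff n)) (M + 2)
    rw [hfin, Finset.sum_range_succ']
    have h0 : (g * (X - C w)).coeff 0 = b 0 * (-w) := by
      rw [Polynomial.mul_coeff_zero]
      simp [hb]
    have hcoef : ∀ i : ℕ, (g * (X - C w)).coeff (i + 1) = b i - b (i + 1) * w := by
      intro i; exact Polynomial.coeff_mul_X_sub_C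
    rw [h0]
    rw [Finset.sum_congr rfl (fun i _ => by rw [hcoef i])]
    have hterm : ∀ i : ℕ, Complex.normSq (b i - b (i + 1) * w)
        = Complex.normSq (b i) + Complex.normSq w * Complex.normSq (b (i + 1))
          - 2 * (conj w * (b i * conj (b (i + 1)))).re := by
      intro i
      have hre : (b i * conj (b (i + 1) * w)).re = (conj w * (b i * conj (b (i + 1)))).re := by
        rw [map_mul]; congr 1; ring
      rw [Complex.normSq_sub, Complex.normSq_mul, hre]
      ring
    rw [Finset.sum_congr rfl (fun i _ => hterm i)]
    have hsplit : ∑ i ∈ range (M + 1),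
        (Complex.normSq (b i) + Complex.normSq w * Complex.normSq (b (i + 1))
          - 2 * (conj w * (b i * conj (b (i + 1)))).re)
        = s + Complex.normSq w * (∑ i ∈ range (M + 1), Complex.normSq (b (i + 1)))
          - 2 * (conj w * T).re := by
      rw [Finset.sum_sub_distrib, Finset.sum_add_distrib, ← Finset.mul_sum, hs]
      congr 1
      rw [hT, Finset.mul_sum, Complex.re_sum, Finset.mul_sum]
    rw [hsplit]
    have hshift : ∑ i ∈ range (M + 1), Complex.normSq (b (i + 1)) = s - Complex.normSq (b 0) := by
      have := Finset.sum_range_succ' (fun n => Complex.normSq (b n)) (M + 1)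
      rw [hs]
      have h2 : ∑ i ∈ range (M + 2), Complex.normSq (b i)
          = ∑ i ∈ range (M + 1), Complex.normSq (b (i + 1)) + Complex.normSq (b 0) := this
      have h3 : ∑ i ∈ range (M + 2), Complex.normSq (b i)
          = ∑ i ∈ range (M + 1), Complex.normSq (b i) := by
        rw [Finset.sum_range_succ, hbz (M + 1) (by omega)]
        simp
      rw [h3] at h2
      linarith
    rw [hshift, Complex.normSq_mul, Complex.normSq_neg]
    ring
  -- apply minimality
  have hmin : ∀ w : ℂ, s + Complex.normSq z0 * s - 2 * (conj z0 * T).re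
      ≤ s + Complex.normSq w * s - 2 * (conj w * T).re := by
    intro w
    have hAcoef : ∀ j : Fin (M + 2), A j = conj (q.coeff (j : ℕ)) := by
      intro j
      rw [hqc (j : ℕ) j.isLt]
      simp
    have eA : ∑ j : Fin (M + 2), Complex.normSq (A j)
        = s + Complex.normSq z0 * s - 2 * (conj z0 * T).re := by
      rw [← hf z0, ← hg']
      exact Finset.sum_congr rfl (fun j _ => by rw [hAcoef j, Complex.normSq_conj])
    set B : Fin (M + 2) → ℂ := fun j => conj ((g * (X - C w)).coeff (j : ℕ)) with hBdef
    have hndw : (g * (X - C w)).natDegree < M + 2 := by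
      rw [Polynomial.natDegree_mul hgne (Polynomial.X_sub_C_ne_zero w),
        Polynomial.natDegree_X_sub_C, hgdeg]
      omega
    have hBorth : ∀ k : Fin r, ∑ j : Fin (M + 2), B j * conj (Z (μ k) j) = 0 := by
      intro k
      have hgk : g.eval (μ k) = 0 := by
        have h1 : q.eval (μ k) = g.eval (μ k) * (μ k - z0) := by
          rw [hg']; simp
        have h2 : μ k - z0 ≠ 0 := sub_ne_zero.mpr fun h => hz0ne k h.symm
        have := part1 k
        rw [h1] at this
        exact (mul_eq_zero.mp this).resolve_right h2
      have hev : (g * (X - C w)).eval (μ k) = 0 := by simp [hgk]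
      have e1 : ∑ j : Fin (M + 2), B j * conj (Z (μ k) j)
          = conj (∑ j : Fin (M + 2), (g * (X - C w)).coeff (j : ℕ) * (μ k) ^ (j : ℕ)) := by
        rw [map_sum]
        refine Finset.sum_congr rfl (fun j _ => ?_)
        rw [hZ, hBdef]
        simp [map_mul]
      rw [e1]
      have e2 : ∑ j : Fin (M + 2), (g * (X - C w)).coeff (j : ℕ) * (μ k) ^ (j : ℕ)
          = (g * (X - C w)).eval (μ k) := by
        rw [Polynomial.eval_eq_sum_range' hndw]
        exact Fin.sum_univ_eq_sum_range (fun n => (g * (X - C w)).coeff n * (μ k) ^ n) (M + 2)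
      rw [e2, hev, map_zero]
    have hBlast : B ⟨M + 2 - 1, hL1⟩ = -1 := by
      have hco : (g * (X - C w)).coeff (M + 1) = b M - b (M + 1) * w :=
        Polynomial.coeff_mul_X_sub_C
      show (starRingEnd ℂ) ((g * (X - C w)).coeff ((⟨M + 2 - 1, hL1⟩ : Fin (M + 2)) : ℕ)) = -1
      rw [show ((⟨M + 2 - 1, hL1⟩ : Fin (M + 2)) : ℕ) = M + 1 by simp]
      rw [hco, hbz (M + 1) (by omega), hbM]
      simp
    have := key B hBorth hBlast
    rw [eA] at this
    have eB : ∑ j : Fin (M + 2), Complex.normSq (B j)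
        = s + Complex.normSq w * s - 2 * (conj w * T).re := by
      rw [← hf w]
      exact Finset.sum_congr rfl (fun j _ => by rw [hBdef]; simp [Complex.normSq_conj])
    rw [eB] at this
    exact this
  -- optimize: z0 = T / s
  have hzT : (s : ℂ) * z0 = T := by
    have h := hmin (T / (s : ℂ))
    have hsC : (s : ℂ) ≠ 0 := by
      simp only [ne_eq, Complex.ofReal_eq_zero]
      linarith
    have e1 : Complex.normSq (T / (s : ℂ)) = Complex.normSq T / s ^ 2 := by
      rw [Complex.normSq_div]
      simp [Complex.normSq_ofReal]
      ring
    have e2 : (conj (T / (s : ℂ)) * T).re = Complex.normSq T / s := by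
      rw [map_div₀]
      have : conj T / conj ((s : ℂ)) * T = (conj T * T) / (s : ℂ) := by
        rw [Complex.conj_ofReal]; ring
      rw [this]
      rw [show conj T * T = ((Complex.normSq T : ℝ) : ℂ) by rw [mul_comm, Complex.mul_conj]]
      rw [show ((Complex.normSq T : ℝ) : ℂ) / ((s:ℝ) : ℂ) = (((Complex.normSq T / s : ℝ)) : ℂ) by
        push_cast; ring]
      simp
    rw [e1, e2] at h
    -- h : s + normSq z0 * s - 2 * (conj z0 * T).re ≤ s + (normSq T / s^2) * s - 2 * (normSq T / s)
    have hkey : Complex.normSq ((s : ℂ) * z0 - T) ≤ 0 := by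
      have expand : Complex.normSq ((s : ℂ) * z0 - T)
          = s ^ 2 * Complex.normSq z0 + Complex.normSq T - 2 * s * (conj z0 * T).re := by
        rw [Complex.normSq_sub, Complex.normSq_mul, Complex.normSq_ofReal]
        have : ((s:ℂ) * z0 * conj T).re = s * (conj z0 * T).re := by
          have : (s:ℂ) * z0 * conj T = (s:ℂ) * (z0 * conj T) := by ring
          rw [this, Complex.re_ofReal_mul]
          congr 1
          simp [Complex.mul_re]
        rw [this]
        ring
      rw [expand]
      have hsne : s ≠ 0 := ne_of_gt hs0
      have e3 : Complex.normSq T / s ^ 2 * s = Complex.normSq T / s := by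
        field_simp
      rw [e3] at h
      have h4 : Complex.normSq z0 * s - 2 * ((starRingEnd ℂ) z0 * T).re
          ≤ -(Complex.normSq T / s) := by linarith
      have h5 : (Complex.normSq z0 * s - 2 * ((starRingEnd ℂ) z0 * T).re) * s
          ≤ -(Complex.normSq T / s) * s := mul_le_mul_of_nonneg_right h4 hs0.le
      have h6 : -(Complex.normSq T / s) * s = -Complex.normSq T := by
        field_simp
      rw [h6] at h5
      nlinarith [h5]
    have := Complex.normSq_eq_zero.mp (le_antisymm hkey (Complex.normSq_nonneg _))
    exact sub_eq_zero.mp this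
  -- Cauchy-Schwarz bound on T
  have hTbound : Complex.normSq T ≤ (s - 1) * s := by
    have hT' : T = ∑ j ∈ range M, b j * conj (b (j + 1)) := by
      rw [hT, Finset.sum_range_succ, hbz (M + 1) (by omega)]
      simp
    have habs : ‖T‖ ≤ ∑ j ∈ range M, ‖b j‖ * ‖b (j + 1)‖ := by
      rw [hT']
      calc ‖∑ j ∈ range M, b j * conj (b (j + 1))‖
          = ‖∑ j ∈ range M, b j * conj (b (j + 1))‖ := rfl
        _ ≤ ∑ j ∈ range M, ‖b j * conj (b (j + 1))‖ := norm_sum_le _ _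
        _ = ∑ j ∈ range M, ‖b j‖ * ‖b (j + 1)‖ := by
            refine Finset.sum_congr rfl (fun j _ => ?_)
            rw [norm_mul]
            simp
    have hCS : (∑ j ∈ range M, ‖b j‖ * ‖b (j + 1)‖) ^ 2
        ≤ (∑ j ∈ range M, ‖b j‖ ^ 2) * (∑ j ∈ range M, ‖b (j + 1)‖ ^ 2) :=
      Finset.sum_mul_sq_le_sq_mul_sq _ _ _
    have e1 : ∑ j ∈ range M, ‖b j‖ ^ 2 = s - 1 := by
      have : s = ∑ j ∈ range M, Complex.normSq (b j) + 1 := by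
        rw [hs, Finset.sum_range_succ, hbM]; simp
      rw [this]
      simp only [← Complex.sq_norm]
      ring
    have e2 : ∑ j ∈ range M, ‖b (j + 1)‖ ^ 2 ≤ s := by
      have h2 : ∑ i ∈ range (M + 1), Complex.normSq (b i)
          = ∑ i ∈ range M, Complex.normSq (b (i + 1)) + Complex.normSq (b 0) :=
        Finset.sum_range_succ' (fun n => Complex.normSq (b n)) M
      have h3 : (0:ℝ) ≤ ‖b 0‖ ^ 2 := sq_nonneg _
      simp only [← Complex.sq_norm] at h2 ⊢
      rw [hs]
      simp only [← Complex.sq_norm]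
      linarith
    have h4 : Complex.normSq T = ‖T‖ ^ 2 := (Complex.sq_norm T).symm
    have h5 : (0:ℝ) ≤ ‖T‖ := norm_nonneg T
    have h6 : (0:ℝ) ≤ ∑ j ∈ range M, ‖b j‖ * ‖b (j + 1)‖ :=
      Finset.sum_nonneg fun j _ => mul_nonneg (norm_nonneg _) (norm_nonneg _)
    have hs1' : (0:ℝ) ≤ s - 1 := by linarith
    calc Complex.normSq T = ‖T‖ ^ 2 := h4
      _ ≤ (∑ j ∈ range M, ‖b j‖ * ‖b (j + 1)‖) ^ 2 :=
          pow_le_pow_left₀ h5 habs 2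
      _ ≤ (∑ j ∈ range M, ‖b j‖ ^ 2) * (∑ j ∈ range M, ‖b (j + 1)‖ ^ 2) := hCS
      _ ≤ (s - 1) * s := by
          rw [e1]
          exact mul_le_mul_of_nonneg_left e2 hs1'
  -- conclude
  have hz0sq : Complex.normSq z0 < 1 := by
    have e1 : Complex.normSq ((s : ℂ) * z0) = s ^ 2 * Complex.normSq z0 := by
      rw [Complex.normSq_mul, Complex.normSq_ofReal]; ring
    rw [hzT] at e1
    have h7 : s ^ 2 * Complex.normSq z0 ≤ s ^ 2 - s := by
      have hring : (s - 1) * s = s ^ 2 - s := by ring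
      linarith [hTbound, e1.ge, e1.le]
    nlinarith [h7, hs0, mul_pos hs0 hs0]
  have hsq := Complex.sq_norm z0
  nlinarith [hsq, hz0sq, norm_nonneg z0]
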